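/- Let A₀, A₁, A₂, A₃ be four pairwise skew lines of a regulus (rulings of a common doubly ruled quadric) and φ a plane not containing any of them. Define fᵢ = φ ∩ Aᵢ and g_{i+2} = A_{i+2} ∩ (fᵢ ∨ A_{i+1}) (i.e., the intersection of A_{i+2} with the plane spanned by the point fᵢ and the line A_{i+1}), indices mod 4. Then the four points g₀, g₁, g₂, g₃ are coplanar. -/

import Mathlib

open Submodule

abbrev Subsp (K : Type*) [Field K] := Submodule K (Fin 4 → K)

variable {K : Type*} [Field K]

def isPoint (S : Subsp K) : Prop := Module.finrank K ↥S = 1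
def isLine  (S : Subsp K) : Prop := Module.finrank K ↥S = 2
def isPlane (S : Subsp K) : Prop := Module.finrank K ↥S = 3
def skew (L M : Subsp K) : Prop := L ⊓ M = ⊥
def meets (L M : Subsp K) : Prop := L ⊓ M ≠ ⊥
def regulus4 (A B C D : Subsp K) : Prop :=
  (skew A B ∧ skew A C ∧ skew A D ∧ skew B C ∧ skew B D ∧ skew C D) ∧
  ∀ T : Subsp K, isLine T →
    ((meets T A → meets T B → meets T C → meets T D) ∧
     (meets T A → meets T B → meets T D → meets T C) ∧
     (meets T A → meets T C → meets T D → meets T B) ∧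
     (meets T B → meets T C → meets T D → meets T A))

/-- The intersection points of a plane with four lines of a regulus. -/
def fo (A : Fin 4 → Subsp K) (φ : Subsp K) (i : Fin 4) : Subsp K := φ ⊓ A i

/-- g(i) = A(i) ∩ (f(i-2) ∨ A(i-1)), indices mod 4. -/
def go (A : Fin 4 → Subsp K) (φ : Subsp K) (i : Fin 4) : Subsp K :=
  A i ⊓ (fo A φ (i+2) ⊔ A (i+3))

/-! ### Auxiliary lemmas -/

private lemma fr_sup_le (p q : Subsp K) :
    Module.finrank K ↥(p ⊔ q) ≤ Module.finrank K ↥p + Module.finrank K ↥q := by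
  have h := Submodule.finrank_sup_add_finrank_inf_eq p q
  omega

private lemma fr_le4 (p : Subsp K) : Module.finrank K ↥p ≤ 4 := by
  have := Submodule.finrank_le p
  rwa [Module.finrank_fin_fun K] at this

private lemma fr_inf_ge (p q : Subsp K) :
    Module.finrank K ↥p + Module.finrank K ↥q ≤ 4 + Module.finrank K ↥(p ⊓ q) := by
  have h := Submodule.finrank_sup_add_finrank_inf_eq p q
  have h2 := fr_le4 (p ⊔ q)
  omega

private lemma fr_bot : Module.finrank K ↥(⊥ : Subsp K) = 0 := by simp

private lemma inf_ne_bot (p q : Subsp K)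
    (h : 5 ≤ Module.finrank K ↥p + Module.finrank K ↥q) : p ⊓ q ≠ ⊥ := by
  intro hb
  have h1 := fr_inf_ge p q
  rw [hb, fr_bot] at h1
  omega

private lemma ne_bot_of_mem {p : Subsp K} {v : Fin 4 → K} (hv : v ≠ 0) (h : v ∈ p) :
    p ≠ ⊥ := by
  intro hb
  rw [hb, Submodule.mem_bot] at h
  exact hv h

private lemma eq_zero_of_skew {p q : Subsp K} (h : p ⊓ q = ⊥) {v : Fin 4 → K}
    (hp : v ∈ p) (hq : v ∈ q) : v = 0 := by
  have hm : v ∈ p ⊓ q := Submodule.mem_inf.mpr ⟨hp, hq⟩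
  rw [h, Submodule.mem_bot] at hm
  exact hm

private lemma finrank_span_pair {x y : Fin 4 → K}
    (h : ∀ s t : K, s • x + t • y = 0 → s = 0 ∧ t = 0) :
    Module.finrank K ↥(span K ({x, y} : Set (Fin 4 → K))) = 2 := by
  have hli : LinearIndependent K ![x, y] := LinearIndependent.pair_iff.mpr h
  have hr : Set.range ![x, y] = {x, y} := by
    ext v; simp [Fin.exists_fin_two]; tauto
  have h2 := finrank_span_eq_card hli
  rw [hr] at h2
  simpa using h2

private lemma exists_span_pair {L : Subsp K} (hL : Module.finrank K ↥L = 2) :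
    ∃ a b : Fin 4 → K, a ∈ L ∧ b ∈ L ∧ L = span K {a, b} ∧
      ∀ s t : K, s • a + t • b = 0 → s = 0 ∧ t = 0 := by
  let B : Module.Basis (Fin 2) K ↥L := Module.finBasisOfFinrankEq K ↥L hL
  have hind : ∀ s t : K, s • ((B 0 : ↥L) : Fin 4 → K) + t • ((B 1 : ↥L) : Fin 4 → K) = 0 →
      s = 0 ∧ t = 0 := by
    intro s t hst
    have h0 : s • B 0 + t • B 1 = (0 : ↥L) := by
      apply Subtype.coe_injective
      show ((s • B 0 + t • B 1 : ↥L) : Fin 4 → K) = ((0 : ↥L) : Fin 4 → K)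
      push_cast
      exact hst
    have hli := Fintype.linearIndependent_iff.mp B.linearIndependent ![s, t]
    have hsum : ∑ i, ![s, t] i • B i = 0 := by
      rw [Fin.sum_univ_two]
      simp only [Matrix.cons_val_zero, Matrix.cons_val_one, Matrix.head_cons]
      exact h0
    exact ⟨hli hsum 0, hli hsum 1⟩
  refine ⟨_, _, (B 0).2, (B 1).2, ?_, hind⟩
  have hle : span K {((B 0 : ↥L) : Fin 4 → K), ↑(B 1)} ≤ L := by
    rw [Submodule.span_le]
    rintro v hv
    rcases hv with rfl | hv
    · exact (B 0).2
    · rw [Set.mem_singleton_iff] at hv; subst hv; exact (B 1).2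
  exact (Submodule.eq_of_le_of_finrank_le hle (by rw [finrank_span_pair hind]; omega)).symm

private lemma finrank_span_single_le (x : Fin 4 → K) :
    Module.finrank K ↥(span K ({x} : Set (Fin 4 → K))) ≤ 1 := by
  rcases eq_or_ne x 0 with rfl | hx
  · rw [show (({(0 : Fin 4 → K)}) : Set (Fin 4 → K)) = (↑(⊥ : Subsp K) : Set (Fin 4 → K)) by simp,
      Submodule.span_eq, fr_bot]
    omega
  · rw [finrank_span_singleton hx]

private lemma perp_solve {α β x y : K} (hne : ¬(α = 0 ∧ β = 0)) (h : α * x + β * y = 0) :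
    ∃ lam : K, x = lam * β ∧ y = -(lam * α) := by
  by_cases hα : α = 0
  · have hβ : β ≠ 0 := fun hβ => hne ⟨hα, hβ⟩
    subst hα
    have hy : y = 0 := by
      have h1 : β * y = 0 := by linear_combination h
      rcases mul_eq_zero.mp h1 with h2 | h2
      · exact absurd h2 hβ
      · exact h2
    exact ⟨x / β, by field_simp, by rw [hy]; ring⟩
  · refine ⟨-(y / α), ?_, by field_simp⟩
    field_simp
    linear_combination h

private lemma exists_graph_comp {L M : Subsp K} {x : Fin 4 → K}
    (hx : x ≠ 0) (hxM : x ∉ M) (hM : Module.finrank K ↥M = 2)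
    (hL : Module.finrank K ↥L = 2) (hLM : L ⊓ M = ⊥) :
    ∃ c, c ∈ M ∧ x + c ∈ L := by
  have hsm : span K {x} ⊓ M = ⊥ := by
    rw [eq_bot_iff]
    rintro v hv
    obtain ⟨hv1, hv2⟩ := Submodule.mem_inf.mp hv
    obtain ⟨k, rfl⟩ := Submodule.mem_span_singleton.mp hv1
    rcases eq_or_ne k 0 with rfl | hk
    · simp
    · exact absurd ((Submodule.smul_mem_iff _ hk).mp hv2) hxM
  have hsup : Module.finrank K ↥(span K {x} ⊔ M) = 3 := by
    have h := Submodule.finrank_sup_add_finrank_inf_eq (span K {x}) M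
    rw [hsm, fr_bot, finrank_span_singleton hx, hM] at h
    omega
  have hm : L ⊓ (span K {x} ⊔ M) ≠ ⊥ := inf_ne_bot _ _ (by rw [hL, hsup])
  obtain ⟨v, hv, hvne⟩ := Submodule.exists_mem_ne_zero_of_ne_bot hm
  obtain ⟨hvL, hvsup⟩ := Submodule.mem_inf.mp hv
  obtain ⟨y, hy, z, hz, hyz⟩ := Submodule.mem_sup.mp hvsup
  obtain ⟨α, rfl⟩ := Submodule.mem_span_singleton.mp hy
  have hα : α ≠ 0 := by
    rintro rfl
    rw [zero_smul, zero_add] at hyz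
    subst hyz
    exact hvne (eq_zero_of_skew hLM hvL hz)
  refine ⟨α⁻¹ • z, Submodule.smul_mem _ _ hz, ?_⟩
  have h1 := Submodule.smul_mem _ α⁻¹ hvL
  rw [← hyz, smul_add, smul_smul, inv_mul_cancel₀ hα, one_smul] at h1
  exact h1

private lemma point_span {p L : Subsp K} {u : Fin 4 → K} (hu : u ∈ p ⊓ L) (hune : u ≠ 0)
    (hL : Module.finrank K ↥L = 2) (hnle : ¬ L ≤ p) : p ⊓ L = span K {u} := by
  have hle1 : Module.finrank K ↥(p ⊓ L) ≤ 1 := by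
    by_contra h
    push_neg at h
    have heq : p ⊓ L = L :=
      Submodule.eq_of_le_of_finrank_le inf_le_right (by rw [hL]; omega)
    exact hnle (by rw [← heq]; exact inf_le_left)
  exact (Submodule.eq_of_le_of_finrank_le
    (span_le.mpr (Set.singleton_subset_iff.mpr hu))
    (by rw [finrank_span_singleton hune]; exact hle1)).symm

private lemma inter_line_plane {L M : Subsp K} {u : Fin 4 → K}
    (hL : Module.finrank K ↥L = 2) (hM : Module.finrank K ↥M = 2)
    (hu : u ≠ 0) (huM : u ∉ M) (hLM : L ⊓ M = ⊥) :
    ∃ v : Fin 4 → K, v ≠ 0 ∧ v ∈ L ∧ v ∈ span K {u} ⊔ M ∧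
      L ⊓ (span K {u} ⊔ M) = span K {v} := by
  have hsm : span K {u} ⊓ M = ⊥ := by
    rw [eq_bot_iff]
    rintro v hv
    obtain ⟨hv1, hv2⟩ := Submodule.mem_inf.mp hv
    obtain ⟨k, rfl⟩ := Submodule.mem_span_singleton.mp hv1
    rcases eq_or_ne k 0 with rfl | hk
    · simp
    · exact absurd ((Submodule.smul_mem_iff _ hk).mp hv2) huM
  have hπ : Module.finrank K ↥(span K {u} ⊔ M) = 3 := by
    have h := Submodule.finrank_sup_add_finrank_inf_eq (span K {u}) M
    rw [hsm, fr_bot, finrank_span_singleton hu, hM] at h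
    omega
  have hne : L ⊓ (span K {u} ⊔ M) ≠ ⊥ := inf_ne_bot _ _ (by rw [hL, hπ])
  obtain ⟨v, hv, hvne⟩ := Submodule.exists_mem_ne_zero_of_ne_bot hne
  obtain ⟨hvL, hvπ⟩ := Submodule.mem_inf.mp hv
  have hle1 : Module.finrank K ↥(L ⊓ (span K {u} ⊔ M)) ≤ 1 := by
    by_contra h
    push_neg at h
    have heq : L ⊓ (span K {u} ⊔ M) = L :=
      Submodule.eq_of_le_of_finrank_le inf_le_left (by rw [hL]; omega)
    have hLπ : L ≤ span K {u} ⊔ M := by rw [← heq]; exact inf_le_right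
    have h4 : Module.finrank K ↥(L ⊔ M) = 4 := by
      have hh := Submodule.finrank_sup_add_finrank_inf_eq L M
      rw [hLM, fr_bot, hL, hM] at hh
      omega
    have hle : L ⊔ M ≤ span K {u} ⊔ M := sup_le hLπ le_sup_right
    have hmono := Submodule.finrank_mono hle
    rw [h4, hπ] at hmono
    omega
  refine ⟨v, hvne, hvL, hvπ, ?_⟩
  exact (Submodule.eq_of_le_of_finrank_le
    (span_le.mpr (Set.singleton_subset_iff.mpr hv))
    (by rw [finrank_span_singleton hvne]; exact hle1)).symm

set_option maxHeartbeats 1000000 in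
/-- Given four pairwise skew lines of a regulus and a plane φ meeting them in
points f(i), the four points g(i+2) = A(i+2) ∩ (f(i) ∨ A(i+1)) are coplanar. -/
theorem regulus_plane_section_coplanarity (h2 : (2 : K) ≠ 0)
    (A : Fin 4 → Subsp K) (hA : ∀ i, isLine (A i))
    (hreg : regulus4 (A 0) (A 1) (A 2) (A 3))
    (φ : Subsp K) (hφ : isPlane φ) (hni : ∀ i, ¬ A i ≤ φ) :
    Module.finrank K ↥(go A φ 0 ⊔ go A φ 1 ⊔ go A φ 2 ⊔ go A φ 3) ≤ 3 := by
  classical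
  obtain ⟨⟨h01, h02, h03, h12, h13, h23⟩, htr⟩ := hreg
  have s01 : A 0 ⊓ A 1 = ⊥ := h01
  have s02 : A 0 ⊓ A 2 = ⊥ := h02
  have s03 : A 0 ⊓ A 3 = ⊥ := h03
  have s12 : A 1 ⊓ A 2 = ⊥ := h12
  have s13 : A 1 ⊓ A 3 = ⊥ := h13
  have s23 : A 2 ⊓ A 3 = ⊥ := h23
  have l0 : Module.finrank K ↥(A 0) = 2 := hA 0
  have l1 : Module.finrank K ↥(A 1) = 2 := hA 1
  have l2 : Module.finrank K ↥(A 2) = 2 := hA 2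
  have l3 : Module.finrank K ↥(A 3) = 2 := hA 3
  have lφ : Module.finrank K ↥φ = 3 := hφ
  -- basis of A 0
  obtain ⟨a, b, haA0, hbA0, hspan0, hab⟩ := exists_span_pair l0
  have ha0 : a ≠ 0 := by
    intro h
    exact one_ne_zero ((hab 1 0 (by rw [h]; module)).1)
  have hb0 : b ≠ 0 := by
    intro h
    exact one_ne_zero ((hab 0 1 (by rw [h]; module)).2)
  -- c, d with a + c, b + d ∈ A 2, c, d ∈ A 1
  obtain ⟨c, hcA1, hacA2⟩ :=
    exists_graph_comp ha0 (fun h => ha0 (eq_zero_of_skew s01 haA0 h)) l1 l2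
      (by rw [inf_comm]; exact s12)
  obtain ⟨d, hdA1, hbdA2⟩ :=
    exists_graph_comp hb0 (fun h => hb0 (eq_zero_of_skew s01 hbA0 h)) l1 l2
      (by rw [inf_comm]; exact s12)
  -- independence of c, d and A 1 = span {c, d}
  have hindcd : ∀ s t : K, s • c + t • d = 0 → s = 0 ∧ t = 0 := by
    intro k l h
    have hw : k • (a + c) + l • (b + d) ∈ A 2 :=
      add_mem (Submodule.smul_mem _ _ hacA2) (Submodule.smul_mem _ _ hbdA2)
    have hw0 : k • (a + c) + l • (b + d) = k • a + l • b := by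
      linear_combination (norm := module) h
    rw [hw0] at hw
    have hw1 : k • a + l • b ∈ A 0 :=
      add_mem (Submodule.smul_mem _ _ haA0) (Submodule.smul_mem _ _ hbA0)
    exact hab k l (eq_zero_of_skew s02 hw1 hw)
  have hspan1 : A 1 = span K {c, d} := by
    have hle : span K ({c, d} : Set (Fin 4 → K)) ≤ A 1 := by
      rw [span_le]
      rintro v hv
      rcases hv with rfl | hv
      · exact hcA1
      · rw [Set.mem_singleton_iff] at hv; subst hv; exact hdA1
    exact (Submodule.eq_of_le_of_finrank_le hle
      (by rw [finrank_span_pair hindcd, l1])).symm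
  -- A 0 ⊔ A 1 = ⊤ and independence of a, b, c, d
  have htop : A 0 ⊔ A 1 = ⊤ := by
    apply Submodule.eq_top_of_finrank_eq
    have h := Submodule.finrank_sup_add_finrank_inf_eq (A 0) (A 1)
    rw [s01, fr_bot, l0, l1] at h
    rw [Module.finrank_fin_fun K]
    omega
  have hle_top : ⊤ ≤ span K (Set.range ![a, b, c, d]) := by
    rw [← htop]
    apply sup_le
    · rw [hspan0, span_le]
      rintro v hv
      rcases hv with rfl | hv
      · exact subset_span ⟨0, rfl⟩
      · rw [Set.mem_singleton_iff] at hv; subst hv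
        exact subset_span ⟨1, rfl⟩
    · rw [hspan1, span_le]
      rintro v hv
      rcases hv with rfl | hv
      · exact subset_span ⟨2, rfl⟩
      · rw [Set.mem_singleton_iff] at hv; subst hv
        exact subset_span ⟨3, rfl⟩
  have hcard : Fintype.card (Fin 4) = Module.finrank K (Fin 4 → K) := by
    rw [Module.finrank_fin_fun K, Fintype.card_fin]
  have hli4 : LinearIndependent K ![a, b, c, d] := by
    have hB := coe_basisOfTopLeSpanOfCardEqFinrank ![a, b, c, d] hle_top hcard
    have := (basisOfTopLeSpanOfCardEqFinrank ![a, b, c, d] hle_top hcard).linearIndependent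
    rwa [hB] at this
  have indep4 : ∀ k0 k1 k2 k3 : K, k0 • a + k1 • b + k2 • c + k3 • d = 0 →
      k0 = 0 ∧ k1 = 0 ∧ k2 = 0 ∧ k3 = 0 := by
    intro k0 k1 k2 k3 hk
    have hli := Fintype.linearIndependent_iff.mp hli4 ![k0, k1, k2, k3]
    have hsum : ∑ i, ![k0, k1, k2, k3] i • ![a, b, c, d] i = 0 := by
      rw [Fin.sum_univ_four]
      simpa using hk
    exact ⟨hli hsum 0, hli hsum 1, hli hsum 2, hli hsum 3⟩
  -- nonzero combinations
  have hc0 : c ≠ 0 := fun h => one_ne_zero ((hindcd 1 0 (by rw [h]; module)).1)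
  have hd0 : d ≠ 0 := fun h => one_ne_zero ((hindcd 0 1 (by rw [h]; module)).2)
  have hacne : a + c ≠ 0 := fun h =>
    one_ne_zero ((indep4 1 0 1 0 (by linear_combination (norm := module) h)).1)
  have hbdne : b + d ≠ 0 := fun h =>
    one_ne_zero ((indep4 0 1 0 1 (by linear_combination (norm := module) h)).2.1)
  have habne : a + b ≠ 0 := fun h => one_ne_zero ((hab 1 1 (by rw [← h]; module)).1)
  have hcdne : c + d ≠ 0 := fun h => one_ne_zero ((hindcd 1 1 (by rw [← h]; module)).1)
  have habcdne : (a + b) + (c + d) ≠ 0 := fun h =>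
    one_ne_zero ((indep4 1 1 1 1 (by linear_combination (norm := module) h)).1)
  -- transversal lines through pairs give A 3 = span {a + t • c, b + t • d}
  have hT1ind : ∀ s t : K, s • a + t • c = 0 → s = 0 ∧ t = 0 := by
    intro s t h
    have h' := indep4 s 0 t 0 (by linear_combination (norm := module) h)
    exact ⟨h'.1, h'.2.2.1⟩
  have hT2ind : ∀ s t : K, s • b + t • d = 0 → s = 0 ∧ t = 0 := by
    intro s t h
    have h' := indep4 0 s 0 t (by linear_combination (norm := module) h)
    exact ⟨h'.2.1, h'.2.2.2⟩
  have hT3ind : ∀ s t : K, s • (a + b) + t • (c + d) = 0 → s = 0 ∧ t = 0 := by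
    intro s t h
    have h' := indep4 s s t t (by linear_combination (norm := module) h)
    exact ⟨h'.1, h'.2.2.1⟩
  have hT1m3 : meets (span K {a, c}) (A 3) := by
    refine (htr _ (finrank_span_pair hT1ind)).1 ?_ ?_ ?_
    · exact ne_bot_of_mem ha0 (Submodule.mem_inf.mpr ⟨subset_span (by simp), haA0⟩)
    · exact ne_bot_of_mem hc0 (Submodule.mem_inf.mpr ⟨subset_span (by simp), hcA1⟩)
    · exact ne_bot_of_mem hacne (Submodule.mem_inf.mpr
        ⟨mem_span_pair.mpr ⟨1, 1, by module⟩, hacA2⟩)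
  have hT2m3 : meets (span K {b, d}) (A 3) := by
    refine (htr _ (finrank_span_pair hT2ind)).1 ?_ ?_ ?_
    · exact ne_bot_of_mem hb0 (Submodule.mem_inf.mpr ⟨subset_span (by simp), hbA0⟩)
    · exact ne_bot_of_mem hd0 (Submodule.mem_inf.mpr ⟨subset_span (by simp), hdA1⟩)
    · exact ne_bot_of_mem hbdne (Submodule.mem_inf.mpr
        ⟨mem_span_pair.mpr ⟨1, 1, by module⟩, hbdA2⟩)
  have hT3m3 : meets (span K {a + b, c + d}) (A 3) := by
    refine (htr _ (finrank_span_pair hT3ind)).1 ?_ ?_ ?_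
    · exact ne_bot_of_mem habne (Submodule.mem_inf.mpr
        ⟨subset_span (by simp), add_mem haA0 hbA0⟩)
    · exact ne_bot_of_mem hcdne (Submodule.mem_inf.mpr
        ⟨subset_span (by simp), add_mem hcA1 hdA1⟩)
    · refine ne_bot_of_mem habcdne (Submodule.mem_inf.mpr
        ⟨mem_span_pair.mpr ⟨1, 1, by module⟩, ?_⟩)
      have he : (a + b) + (c + d) = (a + c) + (b + d) := by module
      rw [he]
      exact add_mem hacA2 hbdA2
  obtain ⟨t, hac3, hbd3⟩ : ∃ t : K, a + t • c ∈ A 3 ∧ b + t • d ∈ A 3 := by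
    obtain ⟨v1, hv1m, hv1ne⟩ := Submodule.exists_mem_ne_zero_of_ne_bot hT1m3
    obtain ⟨hv1T, hv1A3⟩ := Submodule.mem_inf.mp hv1m
    obtain ⟨k1, k2, hk12⟩ := mem_span_pair.mp hv1T
    have hk1 : k1 ≠ 0 := by
      rintro rfl
      have hvA1 : v1 ∈ A 1 := by
        rw [← hk12, zero_smul, zero_add]; exact Submodule.smul_mem _ _ hcA1
      exact hv1ne (eq_zero_of_skew s13 hvA1 hv1A3)
    have hac3 : a + (k1⁻¹ * k2) • c ∈ A 3 := by
      have h1 := Submodule.smul_mem _ k1⁻¹ hv1A3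
      rw [← hk12, smul_add, smul_smul, smul_smul, inv_mul_cancel₀ hk1, one_smul] at h1
      exact h1
    obtain ⟨w1, hw1m, hw1ne⟩ := Submodule.exists_mem_ne_zero_of_ne_bot hT2m3
    obtain ⟨hw1T, hw1A3⟩ := Submodule.mem_inf.mp hw1m
    obtain ⟨m1, m2, hm12⟩ := mem_span_pair.mp hw1T
    have hm1 : m1 ≠ 0 := by
      rintro rfl
      have hvA1 : w1 ∈ A 1 := by
        rw [← hm12, zero_smul, zero_add]; exact Submodule.smul_mem _ _ hdA1
      exact hw1ne (eq_zero_of_skew s13 hvA1 hw1A3)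
    have hbd3 : b + (m1⁻¹ * m2) • d ∈ A 3 := by
      have h1 := Submodule.smul_mem _ m1⁻¹ hw1A3
      rw [← hm12, smul_add, smul_smul, smul_smul, inv_mul_cancel₀ hm1, one_smul] at h1
      exact h1
    obtain ⟨z1, hz1m, hz1ne⟩ := Submodule.exists_mem_ne_zero_of_ne_bot hT3m3
    obtain ⟨hz1T, hz1A3⟩ := Submodule.mem_inf.mp hz1m
    obtain ⟨n1, n2, hn12⟩ := mem_span_pair.mp hz1T
    have hn1 : n1 ≠ 0 := by
      rintro rfl
      have hvA1 : z1 ∈ A 1 := by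
        rw [← hn12, zero_smul, zero_add]
        exact Submodule.smul_mem _ _ (add_mem hcA1 hdA1)
      exact hz1ne (eq_zero_of_skew s13 hvA1 hz1A3)
    have hab3 : (a + b) + (n1⁻¹ * n2) • (c + d) ∈ A 3 := by
      have h1 := Submodule.smul_mem _ n1⁻¹ hz1A3
      rw [← hn12, smul_add, smul_smul, smul_smul, inv_mul_cancel₀ hn1, one_smul] at h1
      exact h1
    have hz3 : ((a + b) + (n1⁻¹ * n2) • (c + d)) - (a + (k1⁻¹ * k2) • c)
        - (b + (m1⁻¹ * m2) • d) ∈ A 3 := sub_mem (sub_mem hab3 hac3) hbd3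
    have hzeq : ((a + b) + (n1⁻¹ * n2) • (c + d)) - (a + (k1⁻¹ * k2) • c)
        - (b + (m1⁻¹ * m2) • d)
        = (n1⁻¹ * n2 - k1⁻¹ * k2) • c + (n1⁻¹ * n2 - m1⁻¹ * m2) • d := by module
    rw [hzeq] at hz3
    have hz1' : (n1⁻¹ * n2 - k1⁻¹ * k2) • c + (n1⁻¹ * n2 - m1⁻¹ * m2) • d ∈ A 1 :=
      add_mem (Submodule.smul_mem _ _ hcA1) (Submodule.smul_mem _ _ hdA1)
    obtain ⟨e1, e2⟩ := hindcd _ _ (eq_zero_of_skew s13 hz1' hz3)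
    have htab : m1⁻¹ * m2 = k1⁻¹ * k2 := by linear_combination e1 - e2
    rw [htab] at hbd3
    exact ⟨k1⁻¹ * k2, hac3, hbd3⟩
  have ht0 : t ≠ 0 := by
    rintro rfl
    rw [zero_smul, add_zero] at hac3
    exact ha0 (eq_zero_of_skew s03 haA0 hac3)
  have ht1 : t ≠ 1 := by
    rintro rfl
    rw [one_smul] at hac3
    exact hacne (eq_zero_of_skew s23 hacA2 hac3)
  have hind3 : ∀ s u : K, s • (a + t • c) + u • (b + t • d) = 0 → s = 0 ∧ u = 0 := by
    intro s u h
    have h' := indep4 s u (s * t) (u * t) (by linear_combination (norm := module) h)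
    exact ⟨h'.1, h'.2.1⟩
  have hind2 : ∀ s u : K, s • (a + c) + u • (b + d) = 0 → s = 0 ∧ u = 0 := by
    intro s u h
    have h' := indep4 s u s u (by linear_combination (norm := module) h)
    exact ⟨h'.1, h'.2.1⟩
  have hspan3 : A 3 = span K {a + t • c, b + t • d} := by
    have hle : span K ({a + t • c, b + t • d} : Set (Fin 4 → K)) ≤ A 3 := by
      rw [span_le]
      rintro v hv
      rcases hv with rfl | hv
      · exact hac3
      · rw [Set.mem_singleton_iff] at hv; subst hv; exact hbd3
    exact (Submodule.eq_of_le_of_finrank_le hle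
      (by rw [finrank_span_pair hind3, l3])).symm
  have hspan2 : A 2 = span K {a + c, b + d} := by
    have hle : span K ({a + c, b + d} : Set (Fin 4 → K)) ≤ A 2 := by
      rw [span_le]
      rintro v hv
      rcases hv with rfl | hv
      · exact hacA2
      · rw [Set.mem_singleton_iff] at hv; subst hv; exact hbdA2
    exact (Submodule.eq_of_le_of_finrank_le hle
      (by rw [finrank_span_pair hind2, l2])).symm
  -- φ is the kernel of a nonzero functional
  have hφne : φ ≠ ⊤ := by
    intro h
    rw [h, finrank_top, Module.finrank_fin_fun K] at lφ
    omega
  obtain ⟨ℓ, hl0, hlker⟩ := Submodule.exists_le_ker_of_lt_top φ (lt_top_iff_ne_top.mpr hφne)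
  have hφker : φ = LinearMap.ker ℓ := by
    apply Submodule.eq_of_le_of_finrank_le hlker
    have hrk := LinearMap.finrank_range_add_finrank_ker ℓ
    rw [Module.finrank_fin_fun K] at hrk
    have hrange : LinearMap.range ℓ ≠ ⊥ := by
      rwa [ne_eq, LinearMap.range_eq_bot]
    have h1 : Module.finrank K ↥(LinearMap.range ℓ) ≠ 0 :=
      fun h => hrange (Submodule.finrank_eq_zero.mp h)
    omega
  have hmemφ : ∀ v : Fin 4 → K, v ∈ φ ↔ ℓ v = 0 := fun v => by
    rw [hφker, LinearMap.mem_ker]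
  -- the functional is nonzero on each line
  have hpne : ¬(ℓ a = 0 ∧ ℓ b = 0) := by
    rintro ⟨hx, hy⟩
    refine hni 0 ?_
    rw [hspan0, span_le]
    rintro v hv
    rcases hv with rfl | hv
    · exact (hmemφ _).mpr hx
    · rw [Set.mem_singleton_iff] at hv; subst hv; exact (hmemφ _).mpr hy
  have hqne : ¬(ℓ c = 0 ∧ ℓ d = 0) := by
    rintro ⟨hx, hy⟩
    refine hni 1 ?_
    rw [hspan1, span_le]
    rintro v hv
    rcases hv with rfl | hv
    · exact (hmemφ _).mpr hx
    · rw [Set.mem_singleton_iff] at hv; subst hv; exact (hmemφ _).mpr hy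
  have hpqne : ¬(ℓ a + ℓ c = 0 ∧ ℓ b + ℓ d = 0) := by
    rintro ⟨hx, hy⟩
    refine hni 2 ?_
    rw [hspan2, span_le]
    rintro v hv
    rcases hv with rfl | hv
    · exact (hmemφ _).mpr (by rw [map_add]; exact hx)
    · rw [Set.mem_singleton_iff] at hv; subst hv
      exact (hmemφ _).mpr (by rw [map_add]; exact hy)
  have hptne : ¬(ℓ a + t * ℓ c = 0 ∧ ℓ b + t * ℓ d = 0) := by
    rintro ⟨hx, hy⟩
    refine hni 3 ?_
    rw [hspan3, span_le]
    rintro v hv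
    rcases hv with rfl | hv
    · exact (hmemφ _).mpr (by rw [map_add, map_smul, smul_eq_mul]; exact hx)
    · rw [Set.mem_singleton_iff] at hv; subst hv
      exact (hmemφ _).mpr (by rw [map_add, map_smul, smul_eq_mul]; exact hy)
  -- intersection points of φ with the four lines
  have hfex : ∀ i : Fin 4, ∃ u : Fin 4 → K, u ∈ φ ⊓ A i ∧ u ≠ 0 := by
    intro i
    have := inf_ne_bot φ (A i) (by rw [lφ, hA i])
    obtain ⟨u, hu, hune⟩ := Submodule.exists_mem_ne_zero_of_ne_bot this
    exact ⟨u, hu, hune⟩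
  obtain ⟨u0, hu0m, hu0ne⟩ := hfex 0
  obtain ⟨u1, hu1m, hu1ne⟩ := hfex 1
  obtain ⟨u2, hu2m, hu2ne⟩ := hfex 2
  obtain ⟨u3, hu3m, hu3ne⟩ := hfex 3
  obtain ⟨hu0φ, hu0A⟩ := Submodule.mem_inf.mp hu0m
  obtain ⟨hu1φ, hu1A⟩ := Submodule.mem_inf.mp hu1m
  obtain ⟨hu2φ, hu2A⟩ := Submodule.mem_inf.mp hu2m
  obtain ⟨hu3φ, hu3A⟩ := Submodule.mem_inf.mp hu3m
  obtain ⟨x0, y0, hu0eq⟩ := mem_span_pair.mp (by rw [hspan0] at hu0A; exact hu0A)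
  obtain ⟨m1, n1, hu1eq⟩ := mem_span_pair.mp (by rw [hspan1] at hu1A; exact hu1A)
  obtain ⟨x2, y2, hu2eq⟩ := mem_span_pair.mp (by rw [hspan2] at hu2A; exact hu2A)
  obtain ⟨x3, y3, hu3eq⟩ := mem_span_pair.mp (by rw [hspan3] at hu3A; exact hu3A)
  -- linear conditions from ℓ
  have E0 : (ℓ a) * x0 + (ℓ b) * y0 = 0 := by
    have h := (hmemφ u0).mp hu0φ
    rw [← hu0eq] at h
    simp only [map_add, map_smul, smul_eq_mul] at h
    linear_combination h
  have E1 : (ℓ c) * m1 + (ℓ d) * n1 = 0 := by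
    have h := (hmemφ u1).mp hu1φ
    rw [← hu1eq] at h
    simp only [map_add, map_smul, smul_eq_mul] at h
    linear_combination h
  have E2 : (ℓ a + ℓ c) * x2 + (ℓ b + ℓ d) * y2 = 0 := by
    have h := (hmemφ u2).mp hu2φ
    rw [← hu2eq] at h
    simp only [map_add, map_smul, smul_eq_mul] at h
    linear_combination h
  have E3 : (ℓ a + t * ℓ c) * x3 + (ℓ b + t * ℓ d) * y3 = 0 := by
    have h := (hmemφ u3).mp hu3φ
    rw [← hu3eq] at h
    simp only [map_add, map_smul, smul_eq_mul] at h
    linear_combination h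
  obtain ⟨la0, hx0, hy0⟩ := perp_solve hpne E0
  obtain ⟨la1, hm1, hn1⟩ := perp_solve hqne E1
  obtain ⟨la2, hx2, hy2⟩ := perp_solve hpqne E2
  obtain ⟨la3, hx3, hy3⟩ := perp_solve hptne E3
  have hla0 : la0 ≠ 0 := by
    rintro rfl
    rw [zero_mul] at hx0
    rw [zero_mul, neg_zero] at hy0
    exact hu0ne (by rw [← hu0eq, hx0, hy0]; module)
  have hla1 : la1 ≠ 0 := by
    rintro rfl
    rw [zero_mul] at hm1
    rw [zero_mul, neg_zero] at hn1
    exact hu1ne (by rw [← hu1eq, hm1, hn1]; module)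
  have hla2 : la2 ≠ 0 := by
    rintro rfl
    rw [zero_mul] at hx2
    rw [zero_mul, neg_zero] at hy2
    exact hu2ne (by rw [← hu2eq, hx2, hy2]; module)
  have hla3 : la3 ≠ 0 := by
    rintro rfl
    rw [zero_mul] at hx3
    rw [zero_mul, neg_zero] at hy3
    exact hu3ne (by rw [← hu3eq, hx3, hy3]; module)
  -- the four points g i
  -- g 0
  have f2span : φ ⊓ A 2 = span K {u2} := point_span hu2m hu2ne l2 (hni 2)
  obtain ⟨v0, hv0ne, hv0L, hv0π, hv0span⟩ :=
    inter_line_plane l0 l3 hu2ne (fun h => hu2ne (eq_zero_of_skew s23 hu2A h)) s03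
  have hgo0 : go A φ 0 = span K {v0} := by
    have e1 : (0:Fin 4)+2 = 2 := by decide
    have e2 : (0:Fin 4)+3 = 3 := by decide
    simp only [go, fo, e1, e2, f2span]
    exact hv0span
  have hg0 : go A φ 0 ≤ span K {x2 • a + y2 • b} := by
    obtain ⟨xx, yy, hrep⟩ := mem_span_pair.mp (by rw [hspan0] at hv0L; exact hv0L)
    obtain ⟨y, hy, z, hz, hyz⟩ := Submodule.mem_sup.mp hv0π
    obtain ⟨s, rfl⟩ := Submodule.mem_span_singleton.mp hy
    obtain ⟨ρ, σ, hzeq⟩ := mem_span_pair.mp (by rw [hspan3] at hz; exact hz)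
    rw [← hu2eq, ← hzeq] at hyz
    have hcomb : xx • a + yy • b =
        s • (x2 • (a + c) + y2 • (b + d)) + (ρ • (a + t • c) + σ • (b + t • d)) :=
      hrep.trans hyz.symm
    have E' : (xx - s*x2 - ρ) • a + (yy - s*y2 - σ) • b
        + (-(s*x2) - ρ*t) • c + (-(s*y2) - σ*t) • d = 0 := by
      linear_combination (norm := module) hcomb
    obtain ⟨e1, e2, e3, e4⟩ := indep4 _ _ _ _ E'
    have hxx : xx = (s - s/t) * x2 := by field_simp; linear_combination t*e1 - e3
    have hyy : yy = (s - s/t) * y2 := by field_simp; linear_combination t*e2 - e4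
    have hw : v0 = (s - s/t) • (x2 • a + y2 • b) := by
      rw [← hrep, hxx, hyy]; module
    rw [hgo0, span_le]
    rintro v hv
    rw [Set.mem_singleton_iff] at hv; subst hv
    exact Submodule.mem_span_singleton.mpr ⟨s - s/t, hw.symm⟩
  -- g 1
  have f3span : φ ⊓ A 3 = span K {u3} := point_span hu3m hu3ne l3 (hni 3)
  obtain ⟨v1', hv1ne', hv1L', hv1π', hv1span'⟩ :=
    inter_line_plane l1 l0 hu3ne (fun h => hu3ne (eq_zero_of_skew s03 h hu3A))
      (by rw [inf_comm]; exact s01)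
  have hgo1 : go A φ 1 = span K {v1'} := by
    have e1 : (1:Fin 4)+2 = 3 := by decide
    have e2 : (1:Fin 4)+3 = 0 := by decide
    simp only [go, fo, e1, e2, f3span]
    exact hv1span'
  have hg1 : go A φ 1 ≤ span K {x3 • c + y3 • d} := by
    obtain ⟨mm, nn, hrep⟩ := mem_span_pair.mp (by rw [hspan1] at hv1L'; exact hv1L')
    obtain ⟨y, hy, z, hz, hyz⟩ := Submodule.mem_sup.mp hv1π'
    obtain ⟨s, rfl⟩ := Submodule.mem_span_singleton.mp hy
    obtain ⟨ρ, σ, hzeq⟩ := mem_span_pair.mp (by rw [hspan0] at hz; exact hz)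
    rw [← hu3eq, ← hzeq] at hyz
    have hcomb : mm • c + nn • d =
        s • (x3 • (a + t • c) + y3 • (b + t • d)) + (ρ • a + σ • b) :=
      hrep.trans hyz.symm
    have E' : (-(s*x3) - ρ) • a + (-(s*y3) - σ) • b
        + (mm - s*x3*t) • c + (nn - s*y3*t) • d = 0 := by
      linear_combination (norm := module) hcomb
    obtain ⟨e1, e2, e3, e4⟩ := indep4 _ _ _ _ E'
    have hmm : mm = (s*t) * x3 := by linear_combination e3
    have hnn : nn = (s*t) * y3 := by linear_combination e4
    have hw : v1' = (s*t) • (x3 • c + y3 • d) := by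
      rw [← hrep, hmm, hnn]; module
    rw [hgo1, span_le]
    rintro v hv
    rw [Set.mem_singleton_iff] at hv; subst hv
    exact Submodule.mem_span_singleton.mpr ⟨s*t, hw.symm⟩
  -- g 2
  have f0span : φ ⊓ A 0 = span K {u0} := point_span hu0m hu0ne l0 (hni 0)
  obtain ⟨v2', hv2ne', hv2L', hv2π', hv2span'⟩ :=
    inter_line_plane l2 l1 hu0ne (fun h => hu0ne (eq_zero_of_skew s01 hu0A h))
      (by rw [inf_comm]; exact s12)
  have hgo2 : go A φ 2 = span K {v2'} := by
    have e1 : (2:Fin 4)+2 = 0 := by decide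
    have e2 : (2:Fin 4)+3 = 1 := by decide
    simp only [go, fo, e1, e2, f0span]
    exact hv2span'
  have hg2 : go A φ 2 ≤ span K {x0 • (a + c) + y0 • (b + d)} := by
    obtain ⟨aa, bb, hrep⟩ := mem_span_pair.mp (by rw [hspan2] at hv2L'; exact hv2L')
    obtain ⟨y, hy, z, hz, hyz⟩ := Submodule.mem_sup.mp hv2π'
    obtain ⟨s, rfl⟩ := Submodule.mem_span_singleton.mp hy
    obtain ⟨ρ, σ, hzeq⟩ := mem_span_pair.mp (by rw [hspan1] at hz; exact hz)
    rw [← hu0eq, ← hzeq] at hyz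
    have hcomb : aa • (a + c) + bb • (b + d) =
        s • (x0 • a + y0 • b) + (ρ • c + σ • d) :=
      hrep.trans hyz.symm
    have E' : (aa - s*x0) • a + (bb - s*y0) • b
        + (aa - ρ) • c + (bb - σ) • d = 0 := by
      linear_combination (norm := module) hcomb
    obtain ⟨e1, e2, e3, e4⟩ := indep4 _ _ _ _ E'
    have haa : aa = s * x0 := by linear_combination e1
    have hbb : bb = s * y0 := by linear_combination e2
    have hw : v2' = s • (x0 • (a + c) + y0 • (b + d)) := by
      rw [← hrep, haa, hbb]; module
    rw [hgo2, span_le]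
    rintro v hv
    rw [Set.mem_singleton_iff] at hv; subst hv
    exact Submodule.mem_span_singleton.mpr ⟨s, hw.symm⟩
  -- g 3
  have f1span : φ ⊓ A 1 = span K {u1} := point_span hu1m hu1ne l1 (hni 1)
  obtain ⟨v3', hv3ne', hv3L', hv3π', hv3span'⟩ :=
    inter_line_plane l3 l2 hu1ne (fun h => hu1ne (eq_zero_of_skew s12 hu1A h))
      (by rw [inf_comm]; exact s23)
  have hgo3 : go A φ 3 = span K {v3'} := by
    have e1 : (3:Fin 4)+2 = 1 := by decide
    have e2 : (3:Fin 4)+3 = 2 := by decide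
    simp only [go, fo, e1, e2, f1span]
    exact hv3span'
  have ht1' : t - 1 ≠ 0 := sub_ne_zero.mpr ht1
  have hg3 : go A φ 3 ≤ span K {m1 • (a + t • c) + n1 • (b + t • d)} := by
    obtain ⟨aa, bb, hrep⟩ := mem_span_pair.mp (by rw [hspan3] at hv3L'; exact hv3L')
    obtain ⟨y, hy, z, hz, hyz⟩ := Submodule.mem_sup.mp hv3π'
    obtain ⟨s, rfl⟩ := Submodule.mem_span_singleton.mp hy
    obtain ⟨ρ, σ, hzeq⟩ := mem_span_pair.mp (by rw [hspan2] at hz; exact hz)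
    rw [← hu1eq, ← hzeq] at hyz
    have hcomb : aa • (a + t • c) + bb • (b + t • d) =
        s • (m1 • c + n1 • d) + (ρ • (a + c) + σ • (b + d)) :=
      hrep.trans hyz.symm
    have E' : (aa - ρ) • a + (bb - σ) • b
        + (aa*t - s*m1 - ρ) • c + (bb*t - s*n1 - σ) • d = 0 := by
      linear_combination (norm := module) hcomb
    obtain ⟨e1, e2, e3, e4⟩ := indep4 _ _ _ _ E'
    have haa : aa = (s/(t-1)) * m1 := by field_simp; linear_combination e3 - e1
    have hbb : bb = (s/(t-1)) * n1 := by field_simp; linear_combination e4 - e2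
    have hw : v3' = (s/(t-1)) • (m1 • (a + t • c) + n1 • (b + t • d)) := by
      rw [← hrep, haa, hbb]; module
    rw [hgo3, span_le]
    rintro v hv
    rw [Set.mem_singleton_iff] at hv; subst hv
    exact Submodule.mem_span_singleton.mpr ⟨s/(t-1), hw.symm⟩
  -- the linear relation among the four points
  have hrel : (la0*la1*la3) • (x2 • a + y2 • b) + (la0*la1*la2) • (x3 • c + y3 • d)
      + (-(la1*la2*la3)) • (x0 • (a + c) + y0 • (b + d))
      + (-(la0*la2*la3)) • (m1 • (a + t • c) + n1 • (b + t • d)) = 0 := by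
    rw [hx0, hy0, hm1, hn1, hx2, hy2, hx3, hy3]
    module
  have hDne : (-(la0*la2*la3)) ≠ 0 := by
    simp only [ne_eq, neg_eq_zero, mul_eq_zero]
    push_neg
    exact ⟨⟨hla0, hla2⟩, hla3⟩
  have hw3mem : m1 • (a + t • c) + n1 • (b + t • d) ∈
      span K {x2 • a + y2 • b, x3 • c + y3 • d, x0 • (a + c) + y0 • (b + d)} := by
    have hDs : (-(la0*la2*la3)) • (m1 • (a + t • c) + n1 • (b + t • d)) =
        (-(la0*la1*la3)) • (x2 • a + y2 • b) + (-(la0*la1*la2)) • (x3 • c + y3 • d)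
        + (la1*la2*la3) • (x0 • (a + c) + y0 • (b + d)) := by
      linear_combination (norm := module) hrel
    have h2' : m1 • (a + t • c) + n1 • (b + t • d) =
        (-(la0*la2*la3))⁻¹ • ((-(la0*la1*la3)) • (x2 • a + y2 • b)
          + (-(la0*la1*la2)) • (x3 • c + y3 • d)
          + (la1*la2*la3) • (x0 • (a + c) + y0 • (b + d))) := by
      rw [← hDs, smul_smul, inv_mul_cancel₀ hDne, one_smul]
    rw [h2']
    refine Submodule.smul_mem _ _ (add_mem (add_mem (Submodule.smul_mem _ _ ?_)
      (Submodule.smul_mem _ _ ?_)) (Submodule.smul_mem _ _ ?_))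
    · exact subset_span (by simp)
    · exact subset_span (by simp)
    · exact subset_span (by simp)
  have hfr : Module.finrank K
      ↥(span K {x2 • a + y2 • b, x3 • c + y3 • d, x0 • (a + c) + y0 • (b + d)}) ≤ 3 := by
    rw [Submodule.span_insert, Submodule.span_insert]
    have h1 := fr_sup_le (K ∙ (x2 • a + y2 • b))
      ((K ∙ (x3 • c + y3 • d)) ⊔ span K {x0 • (a + c) + y0 • (b + d)})
    have h2 := fr_sup_le (K ∙ (x3 • c + y3 • d)) (span K {x0 • (a + c) + y0 • (b + d)})
    have g0 := finrank_span_single_le (x2 • a + y2 • b)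
    have g1 := finrank_span_single_le (x3 • c + y3 • d)
    have g2 := finrank_span_single_le (x0 • (a + c) + y0 • (b + d))
    omega
  have hfin : go A φ 0 ⊔ go A φ 1 ⊔ go A φ 2 ⊔ go A φ 3 ≤
      span K {x2 • a + y2 • b, x3 • c + y3 • d, x0 • (a + c) + y0 • (b + d)} := by
    refine sup_le (sup_le (sup_le ?_ ?_) ?_) ?_
    · exact hg0.trans (span_mono (by simp))
    · exact hg1.trans (span_mono (by simp))
    · exact hg2.trans (span_mono (by simp))
    · exact hg3.trans (span_le.mpr (Set.singleton_subset_iff.mpr hw3mem))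
  exact (Submodule.finrank_mono hfin).trans hfr
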